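/- Let Γ be a simple connected graph containing two adjacent vertices u and v whose neighborhoods are disjoint (i.e., no vertex is adjacent to both u and v). Then the sum of the rows of the adjacency matrix A(Γ) corresponding to u and v is a (0,1)-vector that lies in the row space of A(Γ) over the reals but does not occur as a row of A(Γ). -/

import Mathlib

open SimpleGraph

/-- If a simple connected graph `G` has two adjacent vertices `u, v` with disjoint
neighborhoods, then the sum of the rows of the adjacency matrix corresponding to `u` and `v`
is a `(0,1)`-vector lying in the row space of the adjacency matrix (over `ℝ`) which does
not occur as a row of the adjacency matrix. -/
theorem stmt_0 {V : Type*} [Fintype V] [DecidableEq V] (G : SimpleGraph V)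
    [DecidableRel G.Adj] (hG : G.Connected) (u v : V) (huv : G.Adj u v)
    (hdisj : G.neighborSet u ∩ G.neighborSet v = ∅) :
    (∀ i, (G.adjMatrix ℝ u + G.adjMatrix ℝ v) i = 0 ∨ (G.adjMatrix ℝ u + G.adjMatrix ℝ v) i = 1) ∧
    (∃ c : V → ℝ, Matrix.vecMul c (G.adjMatrix ℝ) = G.adjMatrix ℝ u + G.adjMatrix ℝ v) ∧
    (∀ i : V, G.adjMatrix ℝ u + G.adjMatrix ℝ v ≠ G.adjMatrix ℝ i) := by
  have hboth : ∀ i : V, G.Adj u i → G.Adj v i → False := by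
    intro i h1 h2
    have : i ∈ G.neighborSet u ∩ G.neighborSet v := ⟨h1, h2⟩
    rw [hdisj] at this
    exact this
  refine ⟨?_, ?_, ?_⟩
  · intro i
    by_cases h1 : G.Adj u i <;> by_cases h2 : G.Adj v i
    · exact absurd (hboth i h1 h2) (by simp)
    · right; simp [h1, h2]
    · right; simp [h1, h2]
    · left; simp [h1, h2]
  · refine ⟨Pi.single u 1 + Pi.single v 1, ?_⟩
    rw [Matrix.add_vecMul, Matrix.single_one_vecMul, Matrix.single_one_vecMul]
    rfl
  · intro i h
    have hu : (G.adjMatrix ℝ u + G.adjMatrix ℝ v) u = G.adjMatrix ℝ i u := by rw [h]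
    have hv : (G.adjMatrix ℝ u + G.adjMatrix ℝ v) v = G.adjMatrix ℝ i v := by rw [h]
    have hiu : G.Adj i u := by
      by_contra hc
      simp [hc, huv.symm] at hu
    have hiv : G.Adj i v := by
      by_contra hc
      simp [hc, huv] at hv
    exact hboth i hiu.symm hiv.symm
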